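/- For an integer m ≥ 2 and the indicial polynomial ψ(λ) := λ(λ+1)⋯(λ+m−2) − m!, one has ψ′(2) = m!·(H_m − 1), where H_m = ∑_{j=1}^m 1/j is the m-th harmonic number. -/

import Mathlib

open Finset

lemma aux_hasDeriv (n : ℕ) :
    HasDerivAt (fun lam : ℝ => ∏ k ∈ range n, (lam + k))
      ((∏ k ∈ range n, ((2:ℝ) + k)) * ∑ k ∈ range n, 1/((2:ℝ)+k)) 2 := by
  induction n with
  | zero => simpa using hasDerivAt_const (2:ℝ) 1
  | succ n ih =>
    have h2 : HasDerivAt (fun lam : ℝ => lam + (n:ℝ)) 1 2 :=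
      (hasDerivAt_id 2).add_const _
    have hmul := ih.mul h2
    have hpos : (0:ℝ) < 2 + n := by positivity
    have heq : (∏ k ∈ range n, ((2:ℝ) + k)) * (∑ k ∈ range n, 1/((2:ℝ)+k)) * (2 + n)
        + (∏ k ∈ range n, ((2:ℝ) + k)) * 1
        = (∏ k ∈ range (n+1), ((2:ℝ) + k)) * ∑ k ∈ range (n+1), 1/((2:ℝ)+k) := by
      rw [prod_range_succ, sum_range_succ]
      field_simp
    rw [heq] at hmul
    have hf : (fun lam : ℝ => ∏ k ∈ range (n+1), (lam + k))
        = fun lam : ℝ => (∏ k ∈ range n, (lam + k)) * (lam + n) := by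
      funext lam; rw [prod_range_succ]
    rw [hf]
    exact hmul

lemma aux_prod (n : ℕ) : (∏ k ∈ range n, ((2:ℝ) + k)) = (n+1).factorial := by
  induction n with
  | zero => simp
  | succ n ih =>
    rw [prod_range_succ, ih,
      show (n+1+1).factorial = (n+2) * (n+1).factorial from by rw [Nat.factorial_succ]]
    push_cast
    ring

theorem stmt_5 (m : ℕ) (hm : 2 ≤ m) :
    deriv (fun lam : ℝ => (∏ k ∈ Finset.range (m-1), (lam + k)) - m.factorial) 2
      = m.factorial * ((∑ j ∈ Finset.Icc 1 m, (1:ℝ)/j) - 1) := by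
  have h := ((aux_hasDeriv (m-1)).sub_const (m.factorial : ℝ)).deriv
  rw [h, aux_prod, Nat.sub_add_cancel (le_trans one_le_two hm)]
  congr 1
  rw [← Finset.Ico_add_one_right_eq_Icc, Finset.sum_eq_sum_Ico_succ_bot (by omega : 1 < m + 1),
    Finset.sum_Ico_eq_sum_range]
  have hm1 : m + 1 - 2 = m - 1 := by omega
  rw [hm1]
  push_cast
  ring
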